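/- Let C ⊆ ℝ^n be a nonempty compact convex set of diameter δ > 0 and let f : ℝ^n → ℝ be convex, differentiable, and L-smooth on C. Let (x^t)_{t≥0} be a Frank-Wolfe sequence with line-search: x^0 ∈ C, and for every t there is v^t ∈ C with ⟨∇f(x^t), v^t⟩ = min_{v∈C} ⟨∇f(x^t), v⟩, and x^{t+1} = x^t + η^t(v^t − x^t) where η^t ∈ [0,1] satisfies f(x^t + η^t(v^t − x^t)) ≤ f(x^t + η(v^t − x^t)) for all η ∈ [0,1]. Then for every t ≥ 1, f(x^t) − min_{x∈C} f(x) ≤ 2Lδ²/(t+2). -/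

import Mathlib

open RealInnerProductSpace Topology Filter
set_option maxHeartbeats 1000000

section aux
variable {n : ℕ}

/-- First-order condition for convex differentiable functions. -/
lemma fw_first_order
    {C : Set (EuclideanSpace ℝ (Fin n))} {f : EuclideanSpace ℝ (Fin n) → ℝ}
    {ga : EuclideanSpace ℝ (Fin n)}
    (hconv : ConvexOn ℝ C f)
    {a b : EuclideanSpace ℝ (Fin n)} (ha : a ∈ C) (hb : b ∈ C)
    (hg : HasGradientAt f ga a) :
    ⟪ga, b - a⟫ ≤ f b - f a := by
  have h1 : HasDerivAt (fun s : ℝ => a + s • (b - a)) (b - a) 0 := by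
    simpa using ((hasDerivAt_id (0 : ℝ)).smul_const (b - a)).const_add a
  have hfd : HasFDerivAt f ((InnerProductSpace.toDual ℝ _) ga) (a + (0:ℝ) • (b - a)) := by
    simpa using hg.hasFDerivAt
  have hline : HasDerivAt (fun s : ℝ => f (a + s • (b - a))) ⟪ga, b - a⟫ 0 := by
    have h2 := hfd.comp_hasDerivAt 0 h1
    simp at h2; exact h2
  have hmono : 𝓝[>] (0:ℝ) ≤ 𝓝[≠] (0:ℝ) :=
    nhdsWithin_mono 0 (fun s hs => ne_of_gt hs)
  have hslope := (hasDerivAt_iff_tendsto_slope.1 hline).mono_left hmono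
  refine le_of_tendsto hslope ?_
  filter_upwards [Ioc_mem_nhdsGT_of_mem (by norm_num : (0:ℝ) ∈ Set.Ico 0 1)] with s hs
  have hs0 : 0 < s := hs.1
  have hcomb : a + s • (b - a) = (1 - s) • a + s • b := by
    simp [smul_sub, sub_smul]; abel
  have hcv := hconv.2 ha hb (by linarith [hs.2] : (0:ℝ) ≤ 1 - s) hs0.le (by ring)
  rw [smul_eq_mul, smul_eq_mul, ← hcomb] at hcv
  have hsl : slope (fun s : ℝ => f (a + s • (b - a))) 0 s
      = (f (a + s • (b - a)) - f a) / s := by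
    rw [slope_def_field]; norm_num
  rw [hsl, div_le_iff₀ hs0]
  nlinarith [hcv]

end aux

/-- Sublinear convergence of the Frank-Wolfe algorithm with line-search. -/
theorem fw_line_search_sublinear_convergence
    (n : ℕ) (C : Set (EuclideanSpace ℝ (Fin n)))
    (hCne : C.Nonempty) (hCcomp : IsCompact C) (hCconv : Convex ℝ C)
    (δ : ℝ) (hδ : 0 < δ) (hdiam : Metric.diam C = δ)
    (f : EuclideanSpace ℝ (Fin n) → ℝ)
    (g : EuclideanSpace ℝ (Fin n) → EuclideanSpace ℝ (Fin n))
    (L : ℝ)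
    (hconv : ConvexOn ℝ C f)
    (hgrad : ∀ x ∈ C, HasGradientAt f (g x) x)
    (hsmooth : ∀ x ∈ C, ∀ y ∈ C,
      f y ≤ f x + ⟪g x, y - x⟫ + L / 2 * ‖y - x‖ ^ 2)
    (x v : ℕ → EuclideanSpace ℝ (Fin n)) (η : ℕ → ℝ)
    (hx0 : x 0 ∈ C)
    (hvC : ∀ t, v t ∈ C)
    (hvmin : ∀ t, ∀ u ∈ C, ⟪g (x t), v t⟫ ≤ ⟪g (x t), u⟫)
    (hη : ∀ t, η t ∈ Set.Icc (0 : ℝ) 1)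
    (hls : ∀ t, ∀ η' ∈ Set.Icc (0 : ℝ) 1,
      f (x t + η t • (v t - x t)) ≤ f (x t + η' • (v t - x t)))
    (hupdate : ∀ t, x (t + 1) = x t + η t • (v t - x t)) :
    ∀ t : ℕ, 1 ≤ t → ∀ y ∈ C, f (x t) - f y ≤ 2 * L * δ ^ 2 / ((t : ℝ) + 2) := by
  -- membership of iterates
  have hcomb : ∀ (a b : EuclideanSpace ℝ (Fin n)) (s : ℝ),
      a + s • (b - a) = (1 - s) • a + s • b := by
    intro a b s; simp [smul_sub, sub_smul]; abel
  have hxC : ∀ t, x t ∈ C := by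
    intro t
    induction t with
    | zero => exact hx0
    | succ t ih =>
      rw [hupdate t, hcomb]
      exact hCconv ih (hvC t) (by linarith [(hη t).1, (hη t).2]) (hη t).1 (by ring)
  -- L ≥ 0
  have hLpos : 0 ≤ L := by
    obtain ⟨a, ha, b, hb, hab⟩ : ∃ a ∈ C, ∃ b ∈ C, a ≠ b := by
      by_contra h
      push_neg at h
      have : C.Subsingleton := fun a ha b hb => h a ha b hb
      rw [Metric.diam_subsingleton this] at hdiam
      linarith
    have h1 := fw_first_order hconv ha hb (hgrad a ha)
    have h2 := hsmooth a ha b hb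
    have hn : 0 < ‖b - a‖ ^ 2 := by
      have h0 : b - a ≠ 0 := sub_ne_zero.2 (Ne.symm hab)
      exact pow_pos (norm_pos_iff.mpr h0) 2
    nlinarith
  -- norm bound
  have hnorm : ∀ t, ‖v t - x t‖ ≤ δ := by
    intro t
    rw [← hdiam, ← dist_eq_norm]
    exact Metric.dist_le_diam_of_mem hCcomp.isBounded (hvC t) (hxC t)
  intro t ht y hy
  -- key recurrence
  have key : ∀ t, ∀ s ∈ Set.Icc (0:ℝ) 1,
      f (x (t+1)) ≤ f (x t) + s * (f y - f (x t)) + s^2 * (L * δ^2 / 2) := by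
    intro t s hs
    have hpC : x t + s • (v t - x t) ∈ C := by
      rw [hcomb]
      exact hCconv (hxC t) (hvC t) (by linarith [hs.1, hs.2]) hs.1 (by ring)
    have h1 : f (x (t+1)) ≤ f (x t + s • (v t - x t)) := by
      rw [hupdate t]; exact hls t s hs
    have h2 := hsmooth (x t) (hxC t) _ hpC
    have h3 : (x t + s • (v t - x t)) - x t = s • (v t - x t) := by abel
    rw [h3] at h2
    have h4 : ⟪g (x t), s • (v t - x t)⟫ = s * ⟪g (x t), v t - x t⟫ :=
      real_inner_smul_right _ _ _
    have h5 : ⟪g (x t), v t - x t⟫ ≤ f y - f (x t) := by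
      have ha := hvmin t y hy
      have hb := fw_first_order hconv (hxC t) hy (hgrad (x t) (hxC t))
      have : ⟪g (x t), v t - x t⟫ ≤ ⟪g (x t), y - x t⟫ := by
        simp only [inner_sub_right]
        linarith
      linarith
    have h6 : ‖s • (v t - x t)‖ ^ 2 ≤ s^2 * δ^2 := by
      rw [norm_smul]
      have := hnorm t
      have h7 : (0:ℝ) ≤ ‖v t - x t‖ := norm_nonneg _
      rw [mul_pow]
      have : ‖v t - x t‖^2 ≤ δ^2 := by nlinarith
      have hs2 : (0:ℝ) ≤ ‖(s:ℝ)‖^2 := sq_nonneg _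
      have : ‖(s:ℝ)‖^2 = s^2 := by rw [Real.norm_eq_abs, sq_abs]
      nlinarith [sq_nonneg s, hnorm t, norm_nonneg (v t - x t)]
    calc f (x (t+1)) ≤ f (x t + s • (v t - x t)) := h1
      _ ≤ f (x t) + ⟪g (x t), s • (v t - x t)⟫ + L / 2 * ‖s • (v t - x t)‖^2 := h2
      _ ≤ f (x t) + s * (f y - f (x t)) + s^2 * (L * δ^2 / 2) := by
          rw [h4]
          have := mul_le_mul_of_nonneg_left h5 hs.1
          nlinarith [mul_le_mul_of_nonneg_left h6 (by linarith : (0:ℝ) ≤ L/2)]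
  -- set M
  obtain ⟨M, hM⟩ : ∃ M : ℝ, M = L * δ^2 / 2 := ⟨_, rfl⟩
  rw [show L * δ^2 / 2 = M from hM.symm] at key
  have hMnn : 0 ≤ M := by rw [hM]; positivity
  -- induction
  have main : ∀ t : ℕ, 1 ≤ t → f (x t) - f y ≤ 4 * M / ((t:ℝ) + 2) := by
    intro t ht
    induction t with
    | zero => omega
    | succ t ih =>
      rcases Nat.eq_or_lt_of_le ht with h1 | h1
      · -- t + 1 = 1, i.e. t = 0
        have ht0 : t = 0 := by omega
        subst ht0
        have hk := key 0 1 (by norm_num)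
        norm_num at hk ⊢
        nlinarith [hk, hMnn]
      · have ht1 : 1 ≤ t := by omega
        have ih' := ih ht1
        obtain ⟨A, hA⟩ : ∃ A : ℝ, A = (t:ℝ) + 2 := ⟨_, rfl⟩
        have hT1 : (1:ℝ) ≤ (t:ℝ) := by exact_mod_cast ht1
        have hA3 : (3:ℝ) ≤ A := by rw [hA]; linarith
        have hApos : (0:ℝ) < A := by linarith
        rw [← hA] at ih'
        have hgoal : ((t:ℝ) + 1) + 2 = A + 1 := by rw [hA]; ring
        have hsmem : (2 / A) ∈ Set.Icc (0:ℝ) 1 := by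
          constructor
          · positivity
          · rw [div_le_one hApos]; linarith
        have hk := key t (2/A) hsmem
        have hrec : f (x (t+1)) - f y ≤ (1 - 2/A) * (f (x t) - f y) + (2/A)^2 * M := by
          nlinarith [hk]
        have hfac : (0:ℝ) ≤ 1 - 2/A := by
          have h2 : 2/A ≤ 1 := hsmem.2
          linarith
        have step1 : f (x (t+1)) - f y ≤ (1 - 2/A) * (4*M/A) + (2/A)^2 * M := by
          nlinarith [mul_le_mul_of_nonneg_left ih' hfac]
        have step2 : (1 - 2/A) * (4*M/A) + (2/A)^2 * M ≤ 4*M/(A+1) := by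
          have e : (1 - 2/A) * (4*M/A) + (2/A)^2 * M = 4*M*(A-1)/A^2 := by
            field_simp; ring
          rw [e, div_le_div_iff₀ (by positivity) (by positivity)]
          nlinarith [hMnn, hApos]
        have hfin : f (x (t+1)) - f y ≤ 4*M/(A+1) := le_trans step1 step2
        have hcast : (((t+1:ℕ)):ℝ) + 2 = A + 1 := by push_cast; rw [hA]; ring
        rw [hcast]
        exact hfin

  have := main t ht
  have h4M : 4 * M = 2 * L * δ^2 := by rw [hM]; ring
  rw [h4M] at this
  exact this
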